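/- Let k ≥ 1 and let t ∈ ℝ. The polynomial f_t^k(s) = t^{2k−1}(s−1)^{2k} + (t−1)^{2k−1} t^{2k−1} − (t−1)^{2k−1} s^{2k} attains its global minimum over s ∈ ℝ uniquely at s = t, and f_t^k(t) = 0. -/

import Mathlib

/-- the polynomial `f_t^k` attains its global minimum over `ℝ`
uniquely at `s = t`, where its value is `0`. -/
theorem stmt_19 (k : ℕ) (hk : 1 ≤ k) (t : ℝ) :
    (t ^ (2 * k - 1) * (t - 1) ^ (2 * k) + (t - 1) ^ (2 * k - 1) * t ^ (2 * k - 1)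
        - (t - 1) ^ (2 * k - 1) * t ^ (2 * k) = 0) ∧
    ∀ s : ℝ, s ≠ t →
      0 < t ^ (2 * k - 1) * (s - 1) ^ (2 * k) + (t - 1) ^ (2 * k - 1) * t ^ (2 * k - 1)
          - (t - 1) ^ (2 * k - 1) * s ^ (2 * k) := by
  obtain ⟨n, hn⟩ : ∃ n, 2 * k = n + 1 := ⟨2 * k - 1, by omega⟩
  have hodd : Odd n := ⟨k - 1, by omega⟩
  have h1 : 2 * k - 1 = n := by omega
  rw [h1, hn]
  set f : ℝ → ℝ := fun s => t ^ n * (s - 1) ^ (n + 1) + (t - 1) ^ n * t ^ n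
      - (t - 1) ^ n * s ^ (n + 1) with hf
  have hft : f t = 0 := by simp only [hf]; ring
  have hderiv : ∀ s : ℝ,
      HasDerivAt f (((n : ℝ) + 1) * ((t * (s - 1)) ^ n - ((t - 1) * s) ^ n)) s := by
    intro s
    have hd1 : HasDerivAt (fun s : ℝ => (s - 1) ^ (n + 1))
        (((n : ℝ) + 1) * (s - 1) ^ n) s := by
      simpa using ((hasDerivAt_id s).sub_const 1).fun_pow (n + 1)
    have hd2 : HasDerivAt (fun s : ℝ => s ^ (n + 1)) (((n : ℝ) + 1) * s ^ n) s := by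
      simpa using hasDerivAt_pow (n + 1) s
    have := ((hd1.const_mul (t ^ n)).add_const ((t - 1) ^ n * t ^ n)).fun_sub
      (hd2.const_mul ((t - 1) ^ n))
    refine this.congr_deriv ?_
    rw [mul_pow, mul_pow]; ring
  have hcont : Continuous f := by fun_prop
  have hmono : StrictMonoOn f (Set.Ici t) := by
    apply strictMonoOn_of_deriv_pos (convex_Ici t) hcont.continuousOn
    intro s hs
    rw [interior_Ici] at hs
    rw [(hderiv s).deriv]
    have hlt : (t - 1) * s < t * (s - 1) := by nlinarith [hs.out]
    have := hodd.strictMono_pow hlt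
    have hn1 : (0 : ℝ) < (n : ℝ) + 1 := by positivity
    nlinarith [this]
  have hanti : StrictAntiOn f (Set.Iic t) := by
    apply strictAntiOn_of_deriv_neg (convex_Iic t) hcont.continuousOn
    intro s hs
    rw [interior_Iic] at hs
    rw [(hderiv s).deriv]
    have hlt : t * (s - 1) < (t - 1) * s := by nlinarith [hs.out]
    have := hodd.strictMono_pow hlt
    have hn1 : (0 : ℝ) < (n : ℝ) + 1 := by positivity
    nlinarith [this]
  refine ⟨hft, fun s hs => ?_⟩
  have hpos : 0 < f s := by
    rcases lt_or_gt_of_ne hs with h | h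
    · have := hanti (le_of_lt h) (le_refl t) h
      linarith [hft ▸ this]
    · have := hmono (le_refl t) (le_of_lt h) h
      linarith [hft ▸ this]
  simpa [hf] using hpos
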